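/- Let f : ℝⁿ → ℝ be locally integrable, x ∈ ℝⁿ, D ∈ ℝⁿ, and u : ℝⁿ → ℝ satisfy f(y) = f(x) + D·(y−x) + |y−x| u(y−x) for all y. Then for all h ∈ ℝⁿ and r > 0, |f_r(x+h) − f_r(x) − D·h| ≤ C_n |h| sup_{|a| ≤ r + |h|} |u(a)|, where C_n depends only on n and f_r(z) denotes the average of f over B(z,r). -/

import Mathlib

open Filter Topology MeasureTheory Metric Set
open scoped RealInnerProductSpace

private lemma pow_sub_pow_key (m : ℕ) {a b : ℝ} (hb : 0 ≤ b) (hba : b ≤ a) :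
    a ^ (m + 1) - b ^ (m + 1) ≤ (m + 1) * a ^ m * (a - b) := by
  induction m with
  | zero => simp
  | succ k ih =>
    have ha : 0 ≤ a := hb.trans hba
    have h2 : b ^ (k + 1) ≤ a ^ (k + 1) := pow_le_pow_left₀ hb hba _
    have h3 : a * (a ^ (k + 1) - b ^ (k + 1)) ≤ a * ((k + 1) * a ^ k * (a - b)) :=
      mul_le_mul_of_nonneg_left ih ha
    have h4 : b ^ (k + 1) * (a - b) ≤ a ^ (k + 1) * (a - b) :=
      mul_le_mul_of_nonneg_right h2 (by linarith)
    have h5 : a ^ (k + 1 + 1) - b ^ (k + 1 + 1)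
        = a * (a ^ (k + 1) - b ^ (k + 1)) + b ^ (k + 1) * (a - b) := by ring
    have h6 : a * ((k + 1 : ℝ) * a ^ k * (a - b)) = (k + 1 : ℝ) * a ^ (k + 1) * (a - b) := by ring
    push_cast
    push_cast at ih h3
    linarith

section aux
variable {n : ℕ}

private lemma ball_translate (z : EuclideanSpace ℝ (Fin n)) (r : ℝ)
    (F : EuclideanSpace ℝ (Fin n) → ℝ) :
    ∫ y in ball z r, F y ∂volume = ∫ v in ball (0 : EuclideanSpace ℝ (Fin n)) r, F (v + z) ∂volume := by
  have h1 := (measurePreserving_add_right (volume : Measure (EuclideanSpace ℝ (Fin n))) z).setIntegral_preimage_emb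
    (measurableEmbedding_addRight z) F (ball z r)
  rw [← h1]
  congr 1
  ext v
  simp [mem_ball, dist_eq_norm, add_sub_cancel_right]

private lemma odd_integral (D : EuclideanSpace ℝ (Fin n)) (r : ℝ) :
    ∫ v in ball (0 : EuclideanSpace ℝ (Fin n)) r, ⟪D, v⟫ ∂volume = 0 := by
  have h1 := (Measure.measurePreserving_neg (volume : Measure (EuclideanSpace ℝ (Fin n)))).setIntegral_preimage_emb
    (MeasurableEquiv.neg (EuclideanSpace ℝ (Fin n))).measurableEmbedding
    (fun v => ⟪D, v⟫) (ball 0 r)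
  have h2 : (Neg.neg ⁻¹' ball (0 : EuclideanSpace ℝ (Fin n)) r) = ball 0 r := by
    ext v; simp [mem_ball_zero_iff]
  rw [h2] at h1
  have h3 : ∫ v in ball (0 : EuclideanSpace ℝ (Fin n)) r, ⟪D, -v⟫ ∂volume
      = - ∫ v in ball (0 : EuclideanSpace ℝ (Fin n)) r, ⟪D, v⟫ ∂volume := by
    rw [← integral_neg]; congr 1; ext v; simp
  rw [h3] at h1
  linarith

private lemma cont_integrableOn (F : EuclideanSpace ℝ (Fin n) → ℝ) (hF : Continuous F)
    (z : EuclideanSpace ℝ (Fin n)) (s : ℝ) : IntegrableOn F (ball z s) volume :=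
  (hF.locallyIntegrable.integrableOn_isCompact (isCompact_closedBall z s)).mono_set
    ball_subset_closedBall

private lemma inner_cont (D x : EuclideanSpace ℝ (Fin n)) :
    Continuous fun y : EuclideanSpace ℝ (Fin n) => (⟪D, y - x⟫ : ℝ) :=
  continuous_const.inner (continuous_id.sub continuous_const)

private lemma linear_integral (D x z : EuclideanSpace ℝ (Fin n)) (r : ℝ) :
    ∫ y in ball z r, ⟪D, y - x⟫ ∂volume = (volume (ball z r)).toReal * ⟪D, z - x⟫ := by
  rw [ball_translate z r (fun y => ⟪D, y - x⟫)]
  have h1 : ∀ v : EuclideanSpace ℝ (Fin n), ⟪D, v + z - x⟫ = ⟪D, v⟫ + ⟪D, z - x⟫ := by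
    intro v
    rw [show v + z - x = v + (z - x) by abel, inner_add_right]
  simp only [h1]
  rw [integral_add (cont_integrableOn (fun v => (⟪D, v⟫ : ℝ)) (continuous_const.inner continuous_id) 0 r)
      (integrableOn_const measure_ball_lt_top.ne),
    odd_integral, setIntegral_const, measureReal_def, zero_add, smul_eq_mul,
    Measure.addHaar_ball_center volume z]
end aux


/-- Lemma 3.4: if `f(y) = f(x) + D·(y−x) + |y−x| u(y−x)`, then for all `h` and `r > 0`,
`|f_r(x+h) − f_r(x) − D·h| ≤ C_n |h| sup_{|a|≤r+|h|} |u(a)|`, where `f_r` denotes ball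
averages and `C_n` depends only on the dimension. -/
theorem average_linear_approximation
    (n : ℕ) :
    ∃ C : ℝ, 0 < C ∧
      ∀ (f : EuclideanSpace ℝ (Fin n) → ℝ), LocallyIntegrable f volume →
      ∀ (x D : EuclideanSpace ℝ (Fin n)) (u : EuclideanSpace ℝ (Fin n) → ℝ),
        (∀ y, f y = f x + ⟪D, y - x⟫ + ‖y - x‖ * u (y - x)) →
        ∀ (h : EuclideanSpace ℝ (Fin n)) (r : ℝ), 0 < r →
        ∀ M : ℝ, (∀ a : EuclideanSpace ℝ (Fin n), ‖a‖ ≤ r + ‖h‖ → |u a| ≤ M) →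
        |(⨍ y in ball (x + h) r, f y ∂volume) - (⨍ y in ball x r, f y ∂volume) - ⟪D, h⟫| ≤
          C * ‖h‖ * M := by
  refine ⟨n * 2 ^ (n + 2) + 4, by positivity, ?_⟩
  intro f hf x D u hu h r hr M hM
  by_cases hh : h = 0
  · subst hh
    simp
  have ht : 0 < ‖h‖ := norm_pos_iff.2 hh
  have hM0 : 0 ≤ M := le_trans (abs_nonneg _) (hM 0 (by simp; positivity))
  set g : EuclideanSpace ℝ (Fin n) → ℝ := fun y => f y - f x - ⟪D, y - x⟫ with hgdef
  have hgeq : ∀ y, g y = ‖y - x‖ * u (y - x) := by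
    intro y; rw [hgdef]; simp only; rw [hu y]; ring
  have hgi : ∀ z s, IntegrableOn g (ball z s) volume := by
    intro z s
    exact (((hf.integrableOn_isCompact (isCompact_closedBall z s)).mono_set
      ball_subset_closedBall).sub
      (integrableOn_const measure_ball_lt_top.ne)).sub
      (cont_integrableOn _ (inner_cont D x) z s)
  set V := (volume (ball x r)).toReal with hVdef
  have hVball : ∀ z : EuclideanSpace ℝ (Fin n), volume (ball z r) = volume (ball x r) := fun z =>
    (Measure.addHaar_ball_center volume z r).trans (Measure.addHaar_ball_center volume x r).symm
  have hVpos : 0 < V :=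
    ENNReal.toReal_pos (measure_ball_pos volume x hr).ne' measure_ball_lt_top.ne
  have key : ∀ z, ∫ y in ball z r, f y ∂volume
      = (∫ y in ball z r, g y ∂volume) + V * f x + V * ⟪D, z - x⟫ := by
    intro z
    have heq : ∀ y ∈ ball z r, f y = g y + (f x + ⟪D, y - x⟫) := by
      intro y _; rw [hgdef]; simp only; ring
    rw [setIntegral_congr_fun measurableSet_ball heq,
      integral_add (hgi z r)
        (cont_integrableOn (fun y => f x + ⟪D, y - x⟫) (continuous_const.add (inner_cont D x)) z r),
      integral_add (integrableOn_const (C := f x) measure_ball_lt_top.ne)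
        (cont_integrableOn _ (inner_cont D x) z r),
      setIntegral_const, measureReal_def, linear_integral, hVball z, smul_eq_mul]
    ring
  have havg : (⨍ y in ball (x + h) r, f y ∂volume) - (⨍ y in ball x r, f y ∂volume) - ⟪D, h⟫
      = V⁻¹ * ((∫ y in ball (x + h) r, g y ∂volume) - (∫ y in ball x r, g y ∂volume)) := by
    rw [setAverage_eq, setAverage_eq, measureReal_def, measureReal_def, hVball (x + h), key (x + h), key x,
      show x + h - x = h by abel, sub_self x, inner_zero_right]
    simp only [smul_eq_mul, ← hVdef]
    field_simp
    ring
  rw [havg, abs_mul, abs_inv, abs_of_pos hVpos, inv_mul_le_iff₀ hVpos]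
  -- pointwise bound on g on the big ball
  have hsub1 : ball (x + h) r ⊆ ball x (r + ‖h‖) := by
    intro y hy
    rw [mem_ball, dist_eq_norm] at hy ⊢
    calc ‖y - x‖ = ‖(y - (x + h)) + h‖ := by congr 1; abel
    _ ≤ ‖y - (x + h)‖ + ‖h‖ := norm_add_le _ _
    _ < r + ‖h‖ := by linarith
  have hsub2 : ball x r ⊆ ball x (r + ‖h‖) := ball_subset_ball (by linarith)
  have hgbound : ∀ y ∈ ball x (r + ‖h‖), |g y| ≤ (r + ‖h‖) * M := by
    intro y hy
    rw [mem_ball, dist_eq_norm] at hy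
    rw [hgeq, abs_mul, abs_norm]
    exact mul_le_mul hy.le (hM _ hy.le) (abs_nonneg _) (by positivity)
  have hIb : ∀ s : Set (EuclideanSpace ℝ (Fin n)), s ⊆ ball x (r + ‖h‖) →
      |∫ y in s, g y ∂volume| ≤ (r + ‖h‖) * M * (volume s).toReal := by
    intro s hs
    have hfin : volume s < ⊤ := lt_of_le_of_lt (measure_mono hs) measure_ball_lt_top
    have := norm_setIntegral_le_of_norm_le_const (μ := volume) (s := s) (f := g)
      hfin (fun y hy => by rw [Real.norm_eq_abs]; exact hgbound y (hs hy))
    rw [measureReal_def, Real.norm_eq_abs] at this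
    exact this
  set I₁ := ∫ y in ball (x + h) r, g y ∂volume with hI1
  set I₂ := ∫ y in ball x r, g y ∂volume with hI2
  rcases le_or_gt r ‖h‖ with hcase | hcase
  · -- trivial case : r ≤ ‖h‖
    have h1 : |I₁| ≤ (r + ‖h‖) * M * V := by
      have := hIb _ hsub1
      rwa [hVball (x + h), ← hVdef] at this
    have h2 : |I₂| ≤ (r + ‖h‖) * M * V := hIb _ hsub2
    have h3 : |I₁ - I₂| ≤ |I₁| + |I₂| := abs_sub _ _
    have h4 : (0:ℝ) ≤ (n : ℝ) * 2 ^ (n + 2) * ‖h‖ * M * V := by positivity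
    have h5 : (r + ‖h‖) * M * V ≤ 2 * ‖h‖ * M * V := by
      have : r + ‖h‖ ≤ 2 * ‖h‖ := by linarith
      have hMV : 0 ≤ M * V := mul_nonneg hM0 hVpos.le
      calc (r + ‖h‖) * M * V = (r + ‖h‖) * (M * V) := by ring
      _ ≤ 2 * ‖h‖ * (M * V) := mul_le_mul_of_nonneg_right this hMV
      _ = 2 * ‖h‖ * M * V := by ring
    have h6 : V * (((n:ℝ) * 2 ^ (n + 2) + 4) * ‖h‖ * M)
        = (n:ℝ) * 2 ^ (n + 2) * ‖h‖ * M * V + 4 * ‖h‖ * M * V := by ring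
    linarith
  · -- main case : ‖h‖ < r
    have hn : n ≠ 0 := by
      rintro rfl
      exact hh (Subsingleton.elim h 0)
    obtain ⟨m, rfl⟩ : ∃ m, n = m + 1 := ⟨n - 1, (Nat.succ_pred_eq_of_pos (Nat.pos_of_ne_zero hn)).symm⟩
    set c := (volume (ball (0 : EuclideanSpace ℝ (Fin (m + 1))) 1)).toReal with hcdef
    have hc0 : 0 ≤ c := ENNReal.toReal_nonneg
    clear_value c
    have hrank : Module.finrank ℝ (EuclideanSpace ℝ (Fin (m + 1))) = m + 1 := finrank_euclideanSpace_fin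
    have hballvol : ∀ s : ℝ, 0 < s →
        (volume (ball x s)).toReal = s ^ (m + 1) * c := by
      intro s hs
      rw [Measure.addHaar_ball_of_pos volume x hs, hrank, ENNReal.toReal_mul,
        ENNReal.toReal_ofReal (by positivity), hcdef]
    -- annulus
    set A := ball x (r + ‖h‖) \ ball x (r - ‖h‖) with hAdef
    have hA1 : ball (x + h) r \ ball x r ⊆ A := by
      rintro y ⟨hy1, hy2⟩
      refine ⟨hsub1 hy1, fun hy3 => hy2 ?_⟩
      rw [mem_ball, dist_eq_norm] at hy3 ⊢
      linarith
    have hA2 : ball x r \ ball (x + h) r ⊆ A := by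
      rintro y ⟨hy1, hy2⟩
      refine ⟨hsub2 hy1, fun hy3 => hy2 ?_⟩
      rw [mem_ball, dist_eq_norm] at hy3 ⊢
      have : ‖y - (x + h)‖ = ‖(y - x) - h‖ := by congr 1; abel
      rw [this]
      calc ‖(y - x) - h‖ ≤ ‖y - x‖ + ‖h‖ := norm_sub_le _ _
      _ < r := by linarith
    have hAvol : (volume A).toReal
        = ((r + ‖h‖) ^ (m + 1) - (r - ‖h‖) ^ (m + 1)) * c := by
      rw [hAdef, measure_diff (ball_subset_ball (by linarith))
        measurableSet_ball.nullMeasurableSet measure_ball_lt_top.ne,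
        ENNReal.toReal_sub_of_le (measure_mono (ball_subset_ball (by linarith)))
          measure_ball_lt_top.ne,
        hballvol _ (by linarith), hballvol _ (by linarith)]
      ring
    have hAfin : volume A ≠ ⊤ :=
      (lt_of_le_of_lt (measure_mono diff_subset) measure_ball_lt_top).ne
    -- split the integrals
    have hsplit : I₁ - I₂ = (∫ y in ball (x + h) r \ ball x r, g y ∂volume)
        - ∫ y in ball x r \ ball (x + h) r, g y ∂volume := by
      have e1 := integral_inter_add_diff (μ := volume) (s := ball (x + h) r)
        (t := ball x r) (f := g) measurableSet_ball (hgi (x + h) r)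
      have e2 := integral_inter_add_diff (μ := volume) (s := ball x r)
        (t := ball (x + h) r) (f := g) measurableSet_ball (hgi x r)
      rw [inter_comm] at e2
      rw [hI1, hI2, ← e1, ← e2]
      ring
    have hd1 : |∫ y in ball (x + h) r \ ball x r, g y ∂volume|
        ≤ (r + ‖h‖) * M * (volume A).toReal := by
      refine (hIb _ (fun y hy => hsub1 hy.1)).trans ?_
      have := ENNReal.toReal_mono hAfin (measure_mono hA1)
      exact mul_le_mul_of_nonneg_left this (mul_nonneg (by linarith) hM0)
    have hd2 : |∫ y in ball x r \ ball (x + h) r, g y ∂volume|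
        ≤ (r + ‖h‖) * M * (volume A).toReal := by
      refine (hIb _ (fun y hy => hsub2 hy.1)).trans ?_
      have := ENNReal.toReal_mono hAfin (measure_mono hA2)
      exact mul_le_mul_of_nonneg_left this (mul_nonneg (by linarith) hM0)
    have hpow : (r + ‖h‖) ^ (m + 1) - (r - ‖h‖) ^ (m + 1)
        ≤ (m + 1) * (2 * r) ^ m * (2 * ‖h‖) := by
      have h2 : (r + ‖h‖) ^ m ≤ (2 * r) ^ m := pow_le_pow_left₀ (by linarith) (by linarith) m
      have h3 : ((m:ℝ) + 1) * (r + ‖h‖) ^ m * (r + ‖h‖ - (r - ‖h‖))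
          ≤ (m + 1) * (2 * r) ^ m * (2 * ‖h‖) := by
        have : r + ‖h‖ - (r - ‖h‖) = 2 * ‖h‖ := by ring
        rw [this]
        have hm1 : (0:ℝ) ≤ (m:ℝ) + 1 := by positivity
        exact mul_le_mul_of_nonneg_right
          (mul_le_mul_of_nonneg_left h2 hm1) (by positivity)
      calc (r + ‖h‖) ^ (m + 1) - (r - ‖h‖) ^ (m + 1)
          ≤ ((m:ℝ) + 1) * (r + ‖h‖) ^ m * (r + ‖h‖ - (r - ‖h‖)) := by
            have := pow_sub_pow_key m (by linarith : (0:ℝ) ≤ r - ‖h‖)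
              (by linarith : r - ‖h‖ ≤ r + ‖h‖)
            push_cast at this ⊢
            linarith
      _ ≤ (m + 1) * (2 * r) ^ m * (2 * ‖h‖) := h3
    have hV : V = r ^ (m + 1) * c := hballvol r hr
    have habs : |I₁ - I₂| ≤ 2 * ((r + ‖h‖) * M * (volume A).toReal) := by
      rw [hsplit]
      have := abs_sub (∫ y in ball (x + h) r \ ball x r, g y ∂volume)
        (∫ y in ball x r \ ball (x + h) r, g y ∂volume)
      linarith
    -- final arithmetic
    rw [hAvol] at habs
    have hfinal : 2 * ((r + ‖h‖) * M * (((r + ‖h‖) ^ (m + 1) - (r - ‖h‖) ^ (m + 1)) * c))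
        ≤ V * ((↑(m + 1) * 2 ^ (m + 1 + 2) + 4) * ‖h‖ * M) := by
      rw [hV]
      have h2r : r + ‖h‖ ≤ 2 * r := by linarith
      have hs1 : (0:ℝ) ≤ (r + ‖h‖) * M := by nlinarith
      have hs2 : ((r + ‖h‖) ^ (m + 1) - (r - ‖h‖) ^ (m + 1)) * c
          ≤ ((m + 1) * (2 * r) ^ m * (2 * ‖h‖)) * c :=
        mul_le_mul_of_nonneg_right hpow hc0
      have hs3 : 2 * ((r + ‖h‖) * M * (((r + ‖h‖) ^ (m + 1) - (r - ‖h‖) ^ (m + 1)) * c))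
          ≤ 2 * ((2 * r) * M * (((m + 1) * (2 * r) ^ m * (2 * ‖h‖)) * c)) := by
        have hnn2 : (0:ℝ) ≤ ((r + ‖h‖) ^ (m + 1) - (r - ‖h‖) ^ (m + 1)) * c := by
          apply mul_nonneg _ hc0
          have : (r - ‖h‖) ^ (m + 1) ≤ (r + ‖h‖) ^ (m + 1) :=
            pow_le_pow_left₀ (by linarith) (by linarith) _
          linarith
        have hP1 : (r + ‖h‖) * M ≤ 2 * r * M := mul_le_mul_of_nonneg_right h2r hM0
        have hP2 : (r + ‖h‖) * M * (((r + ‖h‖) ^ (m + 1) - (r - ‖h‖) ^ (m + 1)) * c)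
            ≤ 2 * r * M * (((m + 1) * (2 * r) ^ m * (2 * ‖h‖)) * c) :=
          mul_le_mul hP1 hs2 hnn2 (by positivity)
        linarith
      refine hs3.trans ?_
      have hexp : 2 * ((2 * r) * M * (((m + 1) * (2 * r) ^ m * (2 * ‖h‖)) * c))
          = ((m:ℝ) + 1) * 2 ^ (m + 3) * r ^ (m + 1) * ‖h‖ * M * c := by
        rw [mul_pow]
        ring
      rw [hexp]
      push_cast
      have heq2 : r ^ (m + 1) * c * ((((m:ℝ) + 1) * 2 ^ (m + 1 + 2) + 4) * ‖h‖ * M)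
          = ((m:ℝ) + 1) * 2 ^ (m + 3) * r ^ (m + 1) * ‖h‖ * M * c
            + 4 * ‖h‖ * M * (r ^ (m + 1) * c) := by ring
      have h4 : (0:ℝ) ≤ 4 * ‖h‖ * M * (r ^ (m + 1) * c) := by positivity
      linarith only [heq2, h4]
    linarith only [habs, hfinal]
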